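/- Let σ > 0, r > 0, 0 < δ < 1, and θ(s) = (σ²/2 + √(σ⁴/4 + 2σ² s))/σ². Define g(λ) = δθ(r) + (1-δ)θ(r+λ) - (δr + (1-δ)(r+λ)) · (δ(θ(r)-1)/r + (1-δ)(θ(r+λ)-1)/(r+λ)). Then g(λ) → -∞ as λ → ∞; in particular there exists λ₂ > 0 such that g(λ) < 0 for all λ > λ₂. -/

import Mathlib

open Real Set Filter

/-- The positive root `θ(r)` of `(1/2)σ²θ² - (1/2)σ²θ - r = 0`. -/
noncomputable def θfun (σ r : ℝ) : ℝ :=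
  (σ^2 / 2 + Real.sqrt (σ^4 / 4 + 2 * σ^2 * r)) / σ^2

/-- The verification-condition function for the two-point weighting distribution. -/
noncomputable def gfun (σ r δ lam : ℝ) : ℝ :=
  δ * θfun σ r + (1 - δ) * θfun σ (r + lam) -
    (δ * r + (1 - δ) * (r + lam)) *
      (δ * (θfun σ r - 1) / r + (1 - δ) * (θfun σ (r + lam) - 1) / (r + lam))

lemma my_sqrt_add_le (x y : ℝ) (hx : 0 ≤ x) (hy : 0 ≤ y) :
    Real.sqrt (x + y) ≤ Real.sqrt x + Real.sqrt y := by
  have h : x + y ≤ (Real.sqrt x + Real.sqrt y) ^ 2 := by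
    nlinarith [Real.sq_sqrt hx, Real.sq_sqrt hy, Real.sqrt_nonneg x, Real.sqrt_nonneg y]
  calc Real.sqrt (x + y) ≤ Real.sqrt ((Real.sqrt x + Real.sqrt y) ^ 2) := Real.sqrt_le_sqrt h
    _ = Real.sqrt x + Real.sqrt y := Real.sqrt_sq (by positivity)

lemma my_tendsto_sqrt : Tendsto Real.sqrt atTop atTop := by
  refine tendsto_atTop_atTop.2 fun b => ⟨b ^ 2, fun x hx => ?_⟩
  calc b ≤ |b| := le_abs_self b
    _ = Real.sqrt (b ^ 2) := (Real.sqrt_sq_eq_abs b).symm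
    _ ≤ Real.sqrt x := Real.sqrt_le_sqrt hx

lemma theta_ge_one (σ s : ℝ) (hσ : 0 < σ) (hs : 0 ≤ s) : 1 ≤ θfun σ s := by
  have h : σ ^ 2 / 2 ≤ Real.sqrt (σ ^ 4 / 4 + 2 * σ ^ 2 * s) := by
    rw [show σ ^ 2 / 2 = Real.sqrt ((σ ^ 2 / 2) ^ 2) from (Real.sqrt_sq (by positivity)).symm]
    apply Real.sqrt_le_sqrt; nlinarith
  rw [θfun, le_div_iff₀ (by positivity)]
  nlinarith

lemma theta_gt_one (σ s : ℝ) (hσ : 0 < σ) (hs : 0 < s) : 1 < θfun σ s := by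
  have h : σ ^ 2 / 2 < Real.sqrt (σ ^ 4 / 4 + 2 * σ ^ 2 * s) := by
    rw [show σ ^ 2 / 2 = Real.sqrt ((σ ^ 2 / 2) ^ 2) from (Real.sqrt_sq (by positivity)).symm]
    apply Real.sqrt_lt_sqrt (by positivity); nlinarith [mul_pos (pow_pos hσ 2) hs]
  rw [θfun, lt_div_iff₀ (by positivity)]
  nlinarith

lemma theta_le (σ s : ℝ) (hσ : 0 < σ) (hs : 0 ≤ s) :
    θfun σ s ≤ 1 + Real.sqrt (2 * s) / σ := by
  have h1 : Real.sqrt (σ ^ 4 / 4 + 2 * σ ^ 2 * s)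
      ≤ σ ^ 2 / 2 + σ * Real.sqrt (2 * s) := by
    calc Real.sqrt (σ ^ 4 / 4 + 2 * σ ^ 2 * s)
        ≤ Real.sqrt (σ ^ 4 / 4) + Real.sqrt (2 * σ ^ 2 * s) :=
          my_sqrt_add_le _ _ (by positivity) (by positivity)
      _ = σ ^ 2 / 2 + σ * Real.sqrt (2 * s) := by
          rw [show σ ^ 4 / 4 = (σ ^ 2 / 2) ^ 2 by ring, Real.sqrt_sq (by positivity),
            show 2 * σ ^ 2 * s = σ ^ 2 * (2 * s) by ring,
            Real.sqrt_mul (by positivity), Real.sqrt_sq hσ.le]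
  rw [θfun, div_le_iff₀ (by positivity)]
  have hσ2 : (0:ℝ) < σ ^ 2 := by positivity
  have : (1 + Real.sqrt (2 * s) / σ) * σ ^ 2 = σ ^ 2 + σ * Real.sqrt (2 * s) := by
    field_simp
  rw [this]; linarith

theorem stmt15 (σ r δ : ℝ) (hσ : 0 < σ) (hr : 0 < r) (hδ0 : 0 < δ) (hδ1 : δ < 1) :
    Tendsto (gfun σ r δ) atTop atBot ∧
    ∃ lam₂ > 0, ∀ lam > lam₂, gfun σ r δ lam < 0 := by
  set T0 := θfun σ r with hT0def
  have hT0 : 1 < T0 := theta_gt_one σ r hσ hr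
  set A := δ * (T0 - 1) / r with hAdef
  have hA : 0 < A := div_pos (mul_pos hδ0 (by linarith)) hr
  set c := (1 - δ) * A with hcdef
  have hc : 0 < c := mul_pos (by linarith) hA
  set K := (1 - δ) * Real.sqrt 2 / σ with hKdef
  set C0 := δ * T0 + (1 - δ) * (1 + Real.sqrt (2 * r) / σ) with hC0def
  -- the key pointwise bound
  have hbound : ∀ lam : ℝ, 0 ≤ lam →
      gfun σ r δ lam ≤ C0 + K * Real.sqrt lam - c * lam := by
    intro lam hlam
    have hrl : 0 < r + lam := by linarith
    have hT1 : 1 ≤ θfun σ (r + lam) := theta_ge_one σ (r + lam) hσ hrl.le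
    have hTle : θfun σ (r + lam) ≤ 1 + Real.sqrt (2 * (r + lam)) / σ :=
      theta_le σ (r + lam) hσ hrl.le
    have hsq : Real.sqrt (2 * (r + lam)) ≤ Real.sqrt (2 * r) + Real.sqrt 2 * Real.sqrt lam := by
      calc Real.sqrt (2 * (r + lam)) = Real.sqrt (2 * r + 2 * lam) := by rw [mul_add]
        _ ≤ Real.sqrt (2 * r) + Real.sqrt (2 * lam) :=
            my_sqrt_add_le _ _ (by positivity) (by positivity)
        _ = Real.sqrt (2 * r) + Real.sqrt 2 * Real.sqrt lam := by
            congr 1; exact Real.sqrt_mul (by norm_num) lam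
    have hT2 : θfun σ (r + lam)
        ≤ 1 + (Real.sqrt (2 * r) + Real.sqrt 2 * Real.sqrt lam) / σ := by
      refine hTle.trans ?_
      gcongr
    have hP : (1 - δ) * lam ≤ δ * r + (1 - δ) * (r + lam) := by nlinarith
    have hQ : A ≤ A + (1 - δ) * (θfun σ (r + lam) - 1) / (r + lam) := by
      have h0 : 0 ≤ (1 - δ) * (θfun σ (r + lam) - 1) / (r + lam) :=
        div_nonneg (mul_nonneg (by linarith) (by linarith)) hrl.le
      linarith
    have hPnn : (0:ℝ) ≤ δ * r + (1 - δ) * (r + lam) := by nlinarith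
    have hprod : ((1 - δ) * lam) * A ≤
        (δ * r + (1 - δ) * (r + lam)) *
          (A + (1 - δ) * (θfun σ (r + lam) - 1) / (r + lam)) :=
      mul_le_mul hP hQ hA.le hPnn
    have hmul : (1 - δ) * θfun σ (r + lam)
        ≤ (1 - δ) * (1 + (Real.sqrt (2 * r) + Real.sqrt 2 * Real.sqrt lam) / σ) :=
      mul_le_mul_of_nonneg_left hT2 (by linarith)
    have hexp : (1 - δ) * (1 + (Real.sqrt (2 * r) + Real.sqrt 2 * Real.sqrt lam) / σ)
        = (1 - δ) * (1 + Real.sqrt (2 * r) / σ) + K * Real.sqrt lam := by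
      rw [hKdef]; field_simp; ring
    have hcl : ((1 - δ) * lam) * A = c * lam := by rw [hcdef]; ring
    simp only [gfun, ← hT0def, ← hAdef]
    rw [hC0def]
    linarith [hprod, hmul, hexp.le, hexp.ge]
  -- tendsto of the upper bound
  have h1 : Tendsto (fun lam : ℝ => Real.sqrt lam * (c * Real.sqrt lam - K)) atTop atTop := by
    apply Tendsto.atTop_mul_atTop₀ my_tendsto_sqrt
    have := (my_tendsto_sqrt.const_mul_atTop hc)
    exact tendsto_atTop_add_const_right _ (-K) this |>.congr (fun x => by ring)
  have hU : Tendsto (fun lam : ℝ => C0 + K * Real.sqrt lam - c * lam) atTop atBot := by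
    have h2 : Tendsto (fun lam : ℝ => C0 - Real.sqrt lam * (c * Real.sqrt lam - K))
        atTop atBot := by
      have := tendsto_neg_atTop_atBot.comp h1
      have h3 := tendsto_atBot_add_const_left atTop C0 this
      exact h3.congr (fun x => by simp [Function.comp]; ring)
    refine Tendsto.congr' ?_ h2
    filter_upwards [eventually_ge_atTop (0:ℝ)] with x hx
    have : Real.sqrt x * Real.sqrt x = x := Real.mul_self_sqrt hx
    nlinarith [this]
  have hg : Tendsto (gfun σ r δ) atTop atBot := by
    apply tendsto_atBot_mono' atTop ?_ hU
    filter_upwards [eventually_ge_atTop (0:ℝ)] with x hx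
    exact hbound x hx
  refine ⟨hg, ?_⟩
  have hev : ∀ᶠ lam in atTop, gfun σ r δ lam ≤ -1 :=
    hg.eventually (eventually_le_atBot (-1))
  obtain ⟨a, ha⟩ := eventually_atTop.1 hev
  refine ⟨max a 1, lt_of_lt_of_le one_pos (le_max_right a 1), fun lam hlam => ?_⟩
  have : a ≤ lam := le_trans (le_max_left a 1) hlam.le
  linarith [ha lam this]
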